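/- Let a, b ∈ ℕ with [a,b] ∉ 2S₁. If F ∈ full_{a,b}(2S₁), then E₁(F) is a full Schreier set and min E₂(F) ≤ b/2 + 2. -/

import Mathlib

open Finset

/-- `F < G` for finite sets: every element of `F` is below every element of `G`. -/
def FinsetLT (F G : Finset ℕ) : Prop := ∀ x ∈ F, ∀ y ∈ G, x < y

/-- Membership in the Schreier family `S₁`: a finite set of positive integers
with `|F| ≤ min F` (the empty set belongs trivially). -/
def IsSchreier (F : Finset ℕ) : Prop := ∀ n ∈ F, 0 < n ∧ F.card ≤ n

/-- `F` is a union of at most `d` sets `F₁ < F₂ < ⋯`, each in the family `P`. -/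
def Combine (P : Finset ℕ → Prop) (d : ℕ) (F : Finset ℕ) : Prop :=
  ∃ L : List (Finset ℕ), L.length ≤ d ∧ L.Pairwise FinsetLT ∧
    (∀ G ∈ L, P G) ∧ L.foldr (· ∪ ·) ∅ = F

/-- Membership in `S₂`. -/
def MemS2 (F : Finset ℕ) : Prop :=
  F = ∅ ∨ ∃ h : F.Nonempty, Combine IsSchreier (F.min' h) F

/-- Membership in `S₃`. -/
def MemS3 (F : Finset ℕ) : Prop :=
  F = ∅ ∨ ∃ h : F.Nonempty, Combine MemS2 (F.min' h) F

/-- `F` is a maximal member of the family `P` (among sets of positive integers). -/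
def IsFull (P : Finset ℕ → Prop) (F : Finset ℕ) : Prop :=
  P F ∧ ∀ n : ℕ, 0 < n → n ∉ F → ¬ P (insert n F)

/-- `F ∈ full_{a,b}(P)`. -/
def FullAB (P : Finset ℕ → Prop) (a b : ℕ) (F : Finset ℕ) : Prop :=
  P F ∧ F ⊆ Finset.Icc a b ∧ a ∈ F ∧
    ∀ n ∈ Finset.Icc a b, n ∉ F → ¬ P (insert n F)

/-- The tower function `τ`. -/
def tau : ℕ → ℕ → ℕ
  | 0, a => a
  | i + 1, a => 2 ^ tau i a

/-- `E₁(F)`: `F` itself if `|F| ≤ min F`, otherwise the `min F` smallest elements of `F`. -/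
def E1 (F : Finset ℕ) : Finset ℕ :=
  if h : F.Nonempty then ((F.sort (· ≤ ·)).take (F.min' h)).toFinset else ∅

/-- Union of the first `i` greedy pieces. -/
def Eacc : ℕ → Finset ℕ → Finset ℕ
  | 0, _ => ∅
  | i + 1, F => Eacc i F ∪ E1 (F \ Eacc i F)

/-- The `i`-th greedy piece `E_i(F)` (for `i ≥ 1`). -/
def Epiece (i : ℕ) (F : Finset ℕ) : Finset ℕ := E1 (F \ Eacc (i - 1) F)

open Classical in
/-- `E₁*(F)`: `F` itself if `F ∈ S₂`, otherwise `E₁(F) ∪ ⋯ ∪ E_{min F}(F)`. -/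
noncomputable def E1star (F : Finset ℕ) : Finset ℕ :=
  if MemS2 F then F
  else if h : F.Nonempty then Eacc (F.min' h) F else ∅

/-- Union of the first `i` starred greedy pieces. -/
noncomputable def EaccStar : ℕ → Finset ℕ → Finset ℕ
  | 0, _ => ∅
  | i + 1, F => EaccStar i F ∪ E1star (F \ EaccStar i F)

/-- The `i`-th starred greedy piece `E_i*(F)` (for `i ≥ 1`). -/
noncomputable def EpieceStar (i : ℕ) (F : Finset ℕ) : Finset ℕ :=
  E1star (F \ EaccStar (i - 1) F)

/-- The `k` smallest elements of `S` (all of `S` if `S.card ≤ k`). -/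
def takeSmall (k : ℕ) (S : Finset ℕ) : Finset ℕ := ((S.sort (· ≤ ·)).take k).toFinset

lemma takeSmall_subset (k : ℕ) (S : Finset ℕ) : takeSmall k S ⊆ S := by
  intro x hx
  rw [takeSmall, List.mem_toFinset] at hx
  exact (Finset.mem_sort _).mp (List.mem_of_mem_take hx)

lemma takeSmall_card (k : ℕ) (S : Finset ℕ) : (takeSmall k S).card = min k S.card := by
  rw [takeSmall, List.toFinset_card_of_nodup ((S.sort_nodup _).sublist (List.take_sublist _ _)),
    List.length_take, Finset.length_sort]

lemma takeSmall_lt (k : ℕ) (S : Finset ℕ) :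
    ∀ x ∈ takeSmall k S, ∀ y ∈ S \ takeSmall k S, x < y := by
  intro x hx y hy
  rw [takeSmall, List.mem_toFinset] at hx
  obtain ⟨hyS, hyT⟩ := Finset.mem_sdiff.mp hy
  rw [takeSmall, List.mem_toFinset] at hyT
  have hy' : y ∈ (S.sort (· ≤ ·)).drop k := by
    have : y ∈ (S.sort (· ≤ ·)) := (Finset.mem_sort _).mpr hyS
    rw [← List.take_append_drop k (S.sort (· ≤ ·)), List.mem_append] at this
    tauto
  have hp : ((S.sort (· ≤ ·)).take k ++ (S.sort (· ≤ ·)).drop k).Pairwise (· < ·) := by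
    rw [List.take_append_drop]; exact (Finset.sortedLT_sort S).pairwise
  exact (List.pairwise_append.mp hp).2.2 x hx y hy'

lemma E1_eq (S : Finset ℕ) (h : S.Nonempty) : E1 S = takeSmall (S.min' h) S := by
  simp [E1, takeSmall, h]

lemma E1_of_card_le (S : Finset ℕ) (h : S.Nonempty) (hc : S.card ≤ S.min' h) : E1 S = S := by
  rw [E1_eq S h, takeSmall, List.take_of_length_le (by simpa using hc), Finset.sort_toFinset]

lemma mem_foldr_union (L : List (Finset ℕ)) (n : ℕ) :
    n ∈ L.foldr (· ∪ ·) ∅ ↔ ∃ G ∈ L, n ∈ G := by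
  induction L with
  | nil => simp
  | cons G L ih => simp [ih]

lemma isSchreier_subset {G H : Finset ℕ} (h : IsSchreier G) (hs : H ⊆ G) : IsSchreier H :=
  fun n hn => ⟨(h n (hs hn)).1, le_trans (Finset.card_le_card hs) (h n (hs hn)).2⟩

lemma combine2_split {S T : Finset ℕ} (hT : T ⊆ S) (h1 : IsSchreier T)
    (h2 : IsSchreier (S \ T)) (hlt : ∀ x ∈ T, ∀ y ∈ S \ T, x < y) :
    Combine IsSchreier 2 S := by
  refine ⟨[T, S \ T], by norm_num, ?_, ?_, ?_⟩
  · exact List.pairwise_cons.mpr ⟨by simpa [FinsetLT] using hlt, List.pairwise_singleton _ _⟩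
  · intro G hG
    rcases List.mem_pair.mp hG with rfl | rfl
    · exact h1
    · exact h2
  · simp [Finset.union_sdiff_of_subset hT]

theorem stmt17 (a b : ℕ) (hab : ¬ Combine IsSchreier 2 (Finset.Icc a b))
    (F : Finset ℕ) (hF : FullAB (Combine IsSchreier 2) a b F) :
    IsFull IsSchreier (Epiece 1 F) ∧
    ∃ h : (Epiece 2 F).Nonempty,
      (((Epiece 2 F).min' h : ℚ)) ≤ (b : ℚ) / 2 + 2 := by
  obtain ⟨hF2, hFsub, haF, hmax⟩ := hF
  have hFne : F.Nonempty := ⟨a, haF⟩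
  have ha1 : 0 < a := by
    obtain ⟨L, _, _, hall, hfold⟩ := hF2
    obtain ⟨G, hGL, haG⟩ := (mem_foldr_union L a).mp (hfold ▸ haF)
    exact (hall G hGL a haG).1
  have hmemab : ∀ n ∈ F, a ≤ n ∧ n ≤ b := fun n hn => Finset.mem_Icc.mp (hFsub hn)
  have hab' : a ≤ b := (hmemab a haF).2
  have hmin : F.min' hFne = a :=
    le_antisymm (Finset.min'_le _ _ haF) (Finset.le_min' _ _ _ fun x hx => (hmemab x hx).1)
  have hmiss : ∃ n ∈ Finset.Icc a b, n ∉ F := by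
    by_contra h
    push_neg at h
    have heq : Finset.Icc a b = F := Finset.Subset.antisymm (fun n hn => h n hn) hFsub
    exact hab (heq ▸ hF2)
  -- Step 1 : a < F.card
  have hcard : a < F.card := by
    by_contra hle
    push_neg at hle
    obtain ⟨n, hnab, hnF⟩ := hmiss
    obtain ⟨hna, hnb⟩ := Finset.mem_Icc.mp hnab
    have hScard : (insert n F).card = F.card + 1 := Finset.card_insert_of_notMem hnF
    have hSa : ∀ x ∈ insert n F, a ≤ x := by
      intro x hx
      rcases Finset.mem_insert.mp hx with rfl | hx
      · exact hna
      · exact (hmemab x hx).1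
    have hTsub := takeSmall_subset a (insert n F)
    have hTcard := takeSmall_card a (insert n F)
    have hT1 : IsSchreier (takeSmall a (insert n F)) := by
      intro x hx
      have hax := hSa x (hTsub hx)
      exact ⟨lt_of_lt_of_le ha1 hax, le_trans (by omega) hax⟩
    have hT2 : IsSchreier (insert n F \ takeSmall a (insert n F)) := by
      intro x hx
      have hax := hSa x (Finset.mem_sdiff.mp hx).1
      have hc : (insert n F \ takeSmall a (insert n F)).card ≤ 1 := by
        rw [Finset.card_sdiff_of_subset hTsub, hTcard, hScard]; omega
      exact ⟨lt_of_lt_of_le ha1 hax, le_trans hc (le_trans ha1 hax)⟩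
    exact hmax n hnab hnF (combine2_split hTsub hT1 hT2 (takeSmall_lt a (insert n F)))
  -- the first piece A = E1 F
  have hAeq : E1 F = takeSmall a F := by rw [E1_eq F hFne, hmin]
  set A := E1 F with hA
  have hAsub : A ⊆ F := hAeq ▸ takeSmall_subset a F
  have hAcard : A.card = a := by rw [hAeq, takeSmall_card]; omega
  have hAlt : ∀ x ∈ A, ∀ y ∈ F \ A, x < y := hAeq ▸ takeSmall_lt a F
  have haA : a ∈ A := by
    by_contra haA
    have hAne : A.Nonempty := Finset.card_pos.mp (by omega)
    obtain ⟨x, hx⟩ := hAne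
    exact absurd (hAlt x hx a (Finset.mem_sdiff.mpr ⟨haF, haA⟩))
      (not_lt.mpr ((hmemab x (hAsub hx)).1))
  have hASch : IsSchreier A := by
    intro x hx
    have hax := (hmemab x (hAsub hx)).1
    exact ⟨lt_of_lt_of_le ha1 hax, hAcard ▸ hax⟩
  have hfull : IsFull IsSchreier A := by
    refine ⟨hASch, ?_⟩
    intro n _ hnA hins
    have h2 := (hins a (Finset.mem_insert_of_mem haA)).2
    rw [Finset.card_insert_of_notMem hnA, hAcard] at h2
    omega
  have hE1p : Epiece 1 F = A := by simp [Epiece, Eacc, hA]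
  -- the second piece R = F \ A
  set R := F \ A with hR
  have hRcard : R.card = F.card - a := by rw [hR, Finset.card_sdiff_of_subset hAsub, hAcard]
  have hRne : R.Nonempty := Finset.card_pos.mp (by omega)
  set m := R.min' hRne with hm
  have hmR : m ∈ R := R.min'_mem hRne
  have hmF : m ∈ F := (Finset.mem_sdiff.mp hmR).1
  have hmem_R : ∀ y ∈ R, m ≤ y := fun y hy => Finset.min'_le _ _ hy
  have hRSch : IsSchreier R := by
    obtain ⟨L, hlen, hpair, hall, hfold⟩ := hF2
    rcases L with _ | ⟨G₁, _ | ⟨G₂, _ | ⟨G₃, L⟩⟩⟩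
    · simp at hfold
      exact absurd hfold.symm (Finset.nonempty_iff_ne_empty.mp hFne)
    · simp at hfold
      have hFSch : IsSchreier F := hfold ▸ hall G₁ (by simp)
      have := (hFSch a haF).2
      omega
    · simp only [List.foldr] at hfold
      rw [Finset.union_empty] at hfold
      have hlt : FinsetLT G₁ G₂ := (List.pairwise_cons.mp hpair).1 G₂ (by simp)
      have hsub : R ⊆ G₂ := by
        intro y hy
        by_contra hyG2
        obtain ⟨hyF, hyA⟩ := Finset.mem_sdiff.mp hy
        have hyG1 : y ∈ G₁ := by
          have : y ∈ G₁ ∪ G₂ := hfold ▸ hyF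
          rcases Finset.mem_union.mp this with h | h
          · exact h
          · exact absurd h hyG2
        have hAG1 : A ⊆ G₁ := by
          intro x hx
          have hxy : x < y := hAlt x hx y hy
          have : x ∈ G₁ ∪ G₂ := hfold ▸ (hAsub hx)
          rcases Finset.mem_union.mp this with h | h
          · exact h
          · exact absurd (hlt y hyG1 x h) (by omega)
        have hins : insert y A ⊆ G₁ := Finset.insert_subset hyG1 hAG1
        have hc1 := Finset.card_le_card hins
        rw [Finset.card_insert_of_notMem hyA, hAcard] at hc1
        have hc2 := (hall G₁ (by simp) a (hAG1 haA)).2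
        omega
      exact isSchreier_subset (hall G₂ (by simp)) hsub
    · simp at hlen
  have hrm : R.card ≤ m := (hRSch m hmR).2
  have hE2p : Epiece 2 F = R := by
    have h1 : Eacc 1 F = A := by simp [Eacc, hA]
    have h2 : Epiece 2 F = E1 R := by
      show E1 (F \ Eacc (2-1) F) = E1 R
      rw [show (2:ℕ) - 1 = 1 from rfl, h1, hR]
    rw [h2, E1_of_card_le R hRne (by rw [← hm]; exact hrm)]
  refine ⟨hE1p ▸ hfull, ?_⟩
  rw [hE2p]
  refine ⟨hRne, ?_⟩
  rw [← hm]
  -- it remains to show (m : ℚ) ≤ b / 2 + 2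
  have key : 2 * m ≤ b + 4 := by
    by_contra hkey
    push_neg at hkey
    have hbm : b + 5 ≤ 2 * m := hkey
    have hmb : m ≤ b := (hmemab m hmF).2
    have hrb : R.card ≤ b + 1 - m := by
      have hsub : R ⊆ Finset.Icc m b := fun y hy =>
        Finset.mem_Icc.mpr ⟨hmem_R y hy, (hmemab y (Finset.mem_sdiff.mp hy).1).2⟩
      have := Finset.card_le_card hsub
      rwa [Nat.card_Icc] at this
    have hrm4 : R.card + 4 ≤ m := by omega
    have hAne : A.Nonempty := ⟨a, haA⟩
    set t := A.max' hAne with ht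
    have htA : t ∈ A := A.max'_mem hAne
    have htF : t ∈ F := hAsub htA
    have hat : a ≤ t := A.le_max' a haA
    have htm : t < m := hAlt t htA m hmR
    have hFgt : ∀ y ∈ F, t < y → y ∈ R := by
      intro y hy hty
      by_cases hyA : y ∈ A
      · exact absurd (A.le_max' y hyA) (by omega)
      · exact Finset.mem_sdiff.mpr ⟨hy, hyA⟩
    -- P1 : missing elements above t are at most R.card
    have P1 : ∀ n, a ≤ n → n ≤ b → n ∉ F → t < n → n ≤ R.card := by
      intro n hna hnb hnF htn
      by_contra hgt
      push_neg at hgt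
      apply hmax n (Finset.mem_Icc.mpr ⟨hna, hnb⟩) hnF
      have hnA : n ∉ A := fun h => hnF (hAsub h)
      have hnR : n ∉ R := fun h => hnF (Finset.mem_sdiff.mp h).1
      have hSd : insert n F \ A = insert n R := by
        rw [hR, Finset.insert_sdiff_of_notMem _ hnA]
      have hsubS : A ⊆ insert n F := fun x hx => Finset.mem_insert_of_mem (hAsub hx)
      refine combine2_split hsubS hASch ?_ ?_
      · rw [hSd]
        intro x hx
        have hcx : (insert n R).card = R.card + 1 := Finset.card_insert_of_notMem hnR
        rcases Finset.mem_insert.mp hx with rfl | hx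
        · exact ⟨by omega, by omega⟩
        · have := hmem_R x hx
          exact ⟨by omega, by omega⟩
      · rw [hSd]
        intro x hxA y hy
        rcases Finset.mem_insert.mp hy with rfl | hy
        · exact lt_of_le_of_lt (A.le_max' x hxA) htn
        · exact hAlt x hxA y (hR ▸ hy)
    -- P2 : a missing element below t forces t ≤ R.card
    have P2 : ∀ n, a ≤ n → n ≤ b → n ∉ F → n < t → t ≤ R.card := by
      intro n hna hnb hnF hnt
      by_contra hgt
      push_neg at hgt
      apply hmax n (Finset.mem_Icc.mpr ⟨hna, hnb⟩) hnF
      have hnA : n ∉ A := fun h => hnF (hAsub h)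
      have hnR : n ∉ R := fun h => hnF (Finset.mem_sdiff.mp h).1
      have htR : t ∉ R := fun h => (Finset.mem_sdiff.mp h).2 htA
      have htn : t ≠ n := fun h => hnF (h ▸ htF)
      have hTcard : (insert n (A.erase t)).card = a := by
        rw [Finset.card_insert_of_notMem (fun h => hnA (Finset.mem_of_mem_erase h)),
          Finset.card_erase_of_mem htA, hAcard]
        omega
      have hTsubS : insert n (A.erase t) ⊆ insert n F := by
        intro x hx
        rcases Finset.mem_insert.mp hx with rfl | hx
        · exact Finset.mem_insert_self _ _
        · exact Finset.mem_insert_of_mem (hAsub (Finset.mem_of_mem_erase hx))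
      have hSd : insert n F \ insert n (A.erase t) = insert t R := by
        rw [hR]
        ext x
        simp only [Finset.mem_sdiff, Finset.mem_insert, Finset.mem_erase]
        constructor
        · rintro ⟨h1, h2⟩
          rcases h1 with rfl | h1
          · exact absurd (Or.inl rfl) h2
          · by_cases hxt : x = t
            · exact Or.inl hxt
            · exact Or.inr ⟨h1, fun hxA => h2 (Or.inr ⟨hxt, hxA⟩)⟩
        · rintro (rfl | ⟨hxF, hxA⟩)
          · refine ⟨Or.inr htF, fun h => ?_⟩
            rcases h with h | h
            · exact hnF (h ▸ htF)
            · exact h.1 rfl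
          · refine ⟨Or.inr hxF, fun h => ?_⟩
            rcases h with rfl | h
            · exact hnF hxF
            · exact hxA h.2
      refine combine2_split hTsubS ?_ ?_ ?_
      · intro x hx
        have hax : a ≤ x := by
          rcases Finset.mem_insert.mp hx with rfl | hx
          · exact hna
          · exact (hmemab x (hAsub (Finset.mem_of_mem_erase hx))).1
        exact ⟨by omega, hTcard ▸ hax⟩
      · rw [hSd]
        intro x hx
        have hcx : (insert t R).card = R.card + 1 := Finset.card_insert_of_notMem htR
        rcases Finset.mem_insert.mp hx with rfl | hx
        · exact ⟨by omega, by omega⟩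
        · have := hmem_R x hx
          exact ⟨by omega, by omega⟩
      · rw [hSd]
        intro x hxT y hy
        have hxlt : x < t := by
          rcases Finset.mem_insert.mp hxT with rfl | hx
          · exact hnt
          · have := A.le_max' x (Finset.mem_of_mem_erase hx)
            have hne := (Finset.mem_erase.mp hx).1
            omega
        rcases Finset.mem_insert.mp hy with rfl | hy
        · exact hxlt
        · have := hmem_R y hy
          omega
    obtain ⟨n₀, hn₀ab, hn₀F⟩ := hmiss
    obtain ⟨hn₀a, hn₀b⟩ := Finset.mem_Icc.mp hn₀ab
    by_cases htr : t ≤ R.card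
    · -- counting argument
      have hsub2 : Finset.Icc (R.card + 1) b ⊆ R := by
        intro y hy
        obtain ⟨hy1, hy2⟩ := Finset.mem_Icc.mp hy
        by_cases hyF : y ∈ F
        · exact hFgt y hyF (by omega)
        · exact absurd (P1 y (by omega) hy2 hyF (by omega)) (by omega)
      have := Finset.card_le_card hsub2
      rw [Nat.card_Icc] at this
      omega
    · push_neg at htr
      rcases lt_trichotomy n₀ t with h | h | h
      · exact absurd (P2 n₀ hn₀a hn₀b hn₀F h) (by omega)
      · exact hn₀F (h ▸ htF)
      · exact absurd (P1 n₀ hn₀a hn₀b hn₀F h) (by omega)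
  have hq : (m : ℚ) * 2 ≤ (b : ℚ) + 4 := by exact_mod_cast (by omega : m * 2 ≤ b + 4)
  linarith
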